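/- Let M1 < M2 be coprime positive integers and let D_cp = {m M2 : 0 ≤ m ≤ 2M1−1} ∪ {m M1 : 1 ≤ m ≤ M2−1} be the co-prime array position set. Define I1(Δ) = sin(πM1M2Δ)/sin(πM2Δ/2), I2(Δ) = sin(πM1(M2−1)Δ/2)/sin(πM1Δ/2), and Φ(Δ) = π(M1−1)M2Δ/2. Then for every real Δ with sin(πM2Δ/2) ≠ 0 and sin(πM1Δ/2) ≠ 0, |Σ_{d∈D_cp} exp(iπ d Δ)|² = I1(Δ)² + I2(Δ)² + 2 I1(Δ) I2(Δ) cos(Φ(Δ)). -/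

import Mathlib

open Finset

lemma exp_two_mul_I_sub_one (x : ℂ) :
    Complex.exp (2*x*Complex.I) - 1 = Complex.exp (x*Complex.I) * (2*Complex.I*Complex.sin x) := by
  rw [Complex.sin]
  have this1 : Complex.exp (2*x*Complex.I)
      = Complex.exp (x*Complex.I) * Complex.exp (x*Complex.I) := by
    rw [← Complex.exp_add]; ring_nf
  have h2 : Complex.exp (-x*Complex.I) * Complex.exp (x*Complex.I) = 1 := by
    rw [← Complex.exp_add]; ring_nf; exact Complex.exp_zero
  rw [this1]
  linear_combination (-(Complex.exp (x*Complex.I)*(Complex.exp (-x*Complex.I)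
    - Complex.exp (x*Complex.I))))*Complex.I_sq + h2

lemma geom_exp (N : ℕ) (x : ℂ) (hx : Complex.sin x ≠ 0) :
    ∑ m ∈ Finset.range N, Complex.exp (2*(m:ℂ)*x*Complex.I)
      = Complex.exp (((N:ℂ)-1)*x*Complex.I) * (Complex.sin ((N:ℂ)*x) / Complex.sin x) := by
  have hd : Complex.exp (2*x*Complex.I) - 1 ≠ 0 := by
    rw [exp_two_mul_I_sub_one]
    simp [Complex.exp_ne_zero, hx, Complex.I_ne_zero]
  have hne : Complex.exp (2*x*Complex.I) ≠ 1 := by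
    intro h; apply hd; rw [h]; ring
  have hterm : ∀ m : ℕ, Complex.exp (2*(m:ℂ)*x*Complex.I) = Complex.exp (2*x*Complex.I) ^ m := by
    intro m; rw [← Complex.exp_nat_mul]; ring_nf
  rw [Finset.sum_congr rfl (fun m _ => hterm m), geom_sum_eq hne]
  have hN : Complex.exp (2*x*Complex.I) ^ N = Complex.exp (2*((N:ℂ)*x)*Complex.I) := by
    rw [← Complex.exp_nat_mul]; ring_nf
  rw [hN, exp_two_mul_I_sub_one, exp_two_mul_I_sub_one]
  have he1 : Complex.exp (x*Complex.I) ≠ 0 := Complex.exp_ne_zero _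
  have he2 : Complex.exp (((N:ℂ)-1)*x*Complex.I) * Complex.exp (x*Complex.I)
      = Complex.exp ((N:ℂ)*x*Complex.I) := by
    rw [← Complex.exp_add]; ring_nf
  rw [← he2]
  field_simp

lemma abs_comb (a b θ φ : ℝ) :
    (‖Complex.exp ((θ:ℂ)*Complex.I)*(a:ℂ) + Complex.exp ((φ:ℂ)*Complex.I)*(b:ℂ)‖)^2
      = a^2 + b^2 + 2*a*b*Real.cos (θ - φ) := by
  rw [Complex.sq_norm, Complex.normSq_apply]
  simp [Complex.exp_mul_I, Complex.add_re, Complex.add_im,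
    Complex.mul_re, Complex.mul_im, Real.cos_sub, Complex.cos_ofReal_re, Complex.sin_ofReal_re]
  nlinarith [Real.sin_sq_add_cos_sq θ, Real.sin_sq_add_cos_sq φ]

/-- Co-prime array position set:
`{m M2 : 0 ≤ m ≤ 2M1−1} ∪ {m M1 : 1 ≤ m ≤ M2−1}`. -/
def Dcp (M1 M2 : ℕ) : Finset ℕ :=
  (Finset.range (2 * M1)).image (fun m => m * M2) ∪
    (Finset.Icc 1 (M2 - 1)).image (fun m => m * M1)

/-- the squared modulus of the co-prime array sum equals
`I1(Δ)² + I2(Δ)² + 2 I1(Δ) I2(Δ) cos(Φ(Δ))` where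
`I1(Δ) = sin(πM1M2Δ)/sin(πM2Δ/2)`, `I2(Δ) = sin(πM1(M2−1)Δ/2)/sin(πM1Δ/2)`,
`Φ(Δ) = π(M1−1)M2Δ/2`. -/
theorem coprime_array_beam_pattern (M1 M2 : ℕ) (h0 : 0 < M1) (h12 : M1 < M2)
    (hc : Nat.Coprime M1 M2) (Δ : ℝ)
    (h1 : Real.sin (Real.pi * (M2 : ℝ) * Δ / 2) ≠ 0)
    (h2 : Real.sin (Real.pi * (M1 : ℝ) * Δ / 2) ≠ 0) :
    (‖(∑ d ∈ Dcp M1 M2, Complex.exp (Complex.I * Real.pi * (d : ℝ) * Δ))‖) ^ 2 =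
      (Real.sin (Real.pi * (M1 : ℝ) * (M2 : ℝ) * Δ) / Real.sin (Real.pi * (M2 : ℝ) * Δ / 2)) ^ 2 +
      (Real.sin (Real.pi * (M1 : ℝ) * ((M2 : ℝ) - 1) * Δ / 2) /
          Real.sin (Real.pi * (M1 : ℝ) * Δ / 2)) ^ 2 +
      2 * (Real.sin (Real.pi * (M1 : ℝ) * (M2 : ℝ) * Δ) /
            Real.sin (Real.pi * (M2 : ℝ) * Δ / 2)) *
        (Real.sin (Real.pi * (M1 : ℝ) * ((M2 : ℝ) - 1) * Δ / 2) /
          Real.sin (Real.pi * (M1 : ℝ) * Δ / 2)) *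
        Real.cos (Real.pi * ((M1 : ℝ) - 1) * (M2 : ℝ) * Δ / 2) := by
  set π := Real.pi
  have hM2pos : 0 < M2 := lt_trans h0 h12
  have hM2one : (1:ℕ) ≤ M2 := hM2pos
  -- nonvanishing of complex sines
  have hs1 : Complex.sin ((π * (M2:ℝ) * Δ / 2 : ℝ) : ℂ) ≠ 0 := by
    rw [← Complex.ofReal_sin]; exact_mod_cast Complex.ofReal_ne_zero.mpr h1
  have hs2 : Complex.sin ((π * (M1:ℝ) * Δ / 2 : ℝ) : ℂ) ≠ 0 := by
    rw [← Complex.ofReal_sin]; exact_mod_cast Complex.ofReal_ne_zero.mpr h2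
  -- split the sum
  have hdisj : Disjoint ((Finset.range (2 * M1)).image (fun m => m * M2))
      ((Finset.Icc 1 (M2 - 1)).image (fun m => m * M1)) := by
    rw [Finset.disjoint_left]
    intro a ha hb
    simp only [Finset.mem_image, Finset.mem_range, Finset.mem_Icc] at ha hb
    obtain ⟨m, hm, rfl⟩ := ha
    obtain ⟨n, ⟨hn1, hn2⟩, heq⟩ := hb
    have hdvd : M2 ∣ n * M1 := ⟨m, by rw [heq, mul_comm]⟩
    have hd2 : M2 ∣ n := (Nat.Coprime.dvd_of_dvd_mul_right (Nat.coprime_comm.mp hc)) hdvd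
    have := Nat.le_of_dvd (by omega) hd2
    omega
  have hinj1 : Set.InjOn (fun m => m * M2) (Finset.range (2 * M1)) := by
    intro a _ b _ h; exact Nat.eq_of_mul_eq_mul_right hM2pos h
  have hinj2 : Set.InjOn (fun m => m * M1) (Finset.Icc 1 (M2 - 1)) := by
    intro a _ b _ h; exact Nat.eq_of_mul_eq_mul_right h0 h
  rw [Dcp, Finset.sum_union hdisj, Finset.sum_image hinj1, Finset.sum_image hinj2]
  -- first sum
  have hS1 : ∑ m ∈ Finset.range (2 * M1), Complex.exp (Complex.I * (π:ℝ) * ((m * M2 : ℕ) : ℝ) * Δ)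
      = Complex.exp (((π * (2*(M1:ℝ)-1) * (M2:ℝ) * Δ / 2 : ℝ)) * Complex.I)
          * ((Real.sin (π * (M1:ℝ) * (M2:ℝ) * Δ) / Real.sin (π * (M2:ℝ) * Δ / 2) : ℝ) : ℂ) := by
    have step : ∀ m ∈ Finset.range (2 * M1),
        Complex.exp (Complex.I * (π:ℝ) * ((m * M2 : ℕ) : ℝ) * Δ)
          = Complex.exp (2*(m:ℂ)*((π * (M2:ℝ) * Δ / 2 : ℝ) : ℂ)*Complex.I) := by
      intro m _; congr 1; push_cast; ring
    rw [Finset.sum_congr rfl step, geom_exp (2 * M1) _ hs1]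
    congr 1
    · congr 1; push_cast; ring
    · rw [show ((2*M1 : ℕ):ℂ) * ((π * (M2:ℝ) * Δ / 2 : ℝ):ℂ)
            = ((π * (M1:ℝ) * (M2:ℝ) * Δ : ℝ):ℂ) by push_cast; ring,
        ← Complex.ofReal_sin, ← Complex.ofReal_sin, ← Complex.ofReal_div]
  -- second sum
  have hS2 : ∑ m ∈ Finset.Icc 1 (M2 - 1), Complex.exp (Complex.I * (π:ℝ) * ((m * M1 : ℕ) : ℝ) * Δ)
      = Complex.exp (((π * (M1:ℝ) * (M2:ℝ) * Δ / 2 : ℝ)) * Complex.I)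
          * ((Real.sin (π * (M1:ℝ) * ((M2:ℝ)-1) * Δ / 2) / Real.sin (π * (M1:ℝ) * Δ / 2) : ℝ) : ℂ) := by
    have hIcc : Finset.Icc 1 (M2 - 1) = Finset.Ico 1 M2 := by
      rw [← Finset.Ico_add_one_right_eq_Icc]
      congr 1
      omega
    rw [hIcc, Finset.sum_Ico_eq_sum_range]
    have step : ∀ m ∈ Finset.range (M2 - 1),
        Complex.exp (Complex.I * (π:ℝ) * (((1 + m) * M1 : ℕ) : ℝ) * Δ)
          = Complex.exp (2*((π * (M1:ℝ) * Δ / 2 : ℝ) : ℂ)*Complex.I)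
              * Complex.exp (2*(m:ℂ)*((π * (M1:ℝ) * Δ / 2 : ℝ) : ℂ)*Complex.I) := by
      intro m _
      rw [← Complex.exp_add]
      congr 1; push_cast; ring
    rw [Finset.sum_congr rfl step, ← Finset.mul_sum, geom_exp (M2 - 1) _ hs2,
      ← mul_assoc, ← Complex.exp_add]
    congr 1
    · congr 1
      push_cast [Nat.cast_sub hM2one]
      ring
    · rw [show ((M2 - 1 : ℕ):ℂ) * ((π * (M1:ℝ) * Δ / 2 : ℝ):ℂ)
            = ((π * (M1:ℝ) * ((M2:ℝ) - 1) * Δ / 2 : ℝ):ℂ) by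
          push_cast [Nat.cast_sub hM2one]; ring,
        ← Complex.ofReal_sin, ← Complex.ofReal_sin, ← Complex.ofReal_div]
  rw [hS1, hS2, abs_comb]
  congr 2
  ring
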